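/- Let $K$ and $L$ be compact Hausdorff spaces with $K\subseteq L$, and suppose $S: C(K)\to C(L)$ is a lattice homomorphism such that $S(f)|_K = f$ for every $f\in C(K)$. Assume $S$ is represented as $S(f)(y)=w(y)f(\pi(y))$ for a continuous $w:L\to[0,\infty)$ and a map $\pi:L\to K$ continuous on $L\setminus w^{-1}(\{0\})$. Then $w(x)=1$ and $\pi(x)=x$ for every $x\in K$; consequently $K$ is a retract of the open set $L\setminus w^{-1}(\{0\})\supseteq K$, i.e., $K$ is a neighborhood retract of $L$. -/
import Mathlib


/-- If `K ⊆ L` are compact Hausdorff spaces and `S : C(K) → C(L)` is a lattice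
homomorphism with `S(f)|_K = f`, represented as a weighted composition operator
`S(f)(y) = w(y)·f(π(y))`, then `w ≡ 1` and `π = id` on `K`; consequently `K` is a
retract of the open set `{y : w y ≠ 0}`, i.e. a neighborhood retract of `L`. -/
theorem neighborhood_retract_of_lattice_section
    {L : Type*} [TopologicalSpace L] [CompactSpace L] [T2Space L]
    (K : Set L) (hK : IsCompact K)
    (S : C(↥K, ℝ) →ₗ[ℝ] C(L, ℝ))
    (hSlat : ∀ f g : C(↥K, ℝ), S (f ⊔ g) = S f ⊔ S g)
    (w : C(L, ℝ)) (hw : ∀ y : L, 0 ≤ w y)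
    (π : L → ↥K)
    (hπcont : ContinuousOn (fun y => (π y : L)) {y : L | w y ≠ 0})
    (hrep : ∀ (f : C(↥K, ℝ)) (y : L), S f y = w y * f (π y))
    (hsection : ∀ (f : C(↥K, ℝ)) (x : ↥K), S f (x : L) = f x) :
    (∀ x : ↥K, w (x : L) = 1 ∧ π (x : L) = x) ∧
    (IsOpen {y : L | w y ≠ 0} ∧ K ⊆ {y : L | w y ≠ 0} ∧
      ContinuousOn (fun y => (π y : L)) {y : L | w y ≠ 0} ∧
      (∀ y ∈ {y : L | w y ≠ 0}, (π y : L) ∈ K) ∧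
      (∀ x : ↥K, (π (x : L) : L) = (x : L))) := by
  have : CompactSpace ↥K := isCompact_iff_compactSpace.mp hK
  -- w = 1 on K
  have hw1 : ∀ x : ↥K, w (x : L) = 1 := by
    intro x
    have h := hsection 1 x
    rw [hrep] at h
    simpa using h
  have hπ : ∀ x : ↥K, π (x : L) = x := by
    intro x
    by_contra hne
    obtain ⟨f, hf0, hf1, -⟩ := exists_continuous_zero_one_of_isClosed
      (isClosed_singleton (x := π (x : L))) (isClosed_singleton (x := x))
      (by simpa [Set.disjoint_singleton] using hne)
    have h := hsection f x
    rw [hrep, hw1, hf0 rfl, hf1 rfl] at h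
    simp at h
  refine ⟨fun x => ⟨hw1 x, hπ x⟩, ?_, ?_, hπcont, fun y _ => (π y).2, fun x => by rw [hπ x]⟩
  · have : {y : L | w y ≠ 0} = w ⁻¹' {0}ᶜ := rfl
    rw [this]
    exact (isClosed_singleton.preimage w.continuous).isOpen_compl
  · intro y hy
    have := hw1 ⟨y, hy⟩
    simp only [Set.mem_setOf_eq]
    rw [this]; norm_num
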